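/- arXiv:math/0304167 — 4 statements merged into one kernel-verified Lean document; each statement's English description precedes it below -/
import Mathlib

section
/- There exists a constant λ > 1 with the following property: for every δ > 0 there exists a₀ < 2 such that for every parameter a with a₀ ≤ a ≤ 2, every point x ∈ [−1,1] and every integer n ≥ 1 such that φ_a^j(x) ∈ [−1,1] \ (−δ,δ) for all 0 ≤ j ≤ n−1, the derivative of the n-th iterate satisfies |(φ_a^n)'(x)| ≥ δ·λ^n; if moreover φ_a^n(x) ∈ (−δ,δ), then |(φ_a^n)'(x)| ≥ λ^n. -/
set_option maxHeartbeats 1000000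


open Set

/-- The quadratic family `φ_a(x) = 1 - a x²`. -/
noncomputable def qmap (a : ℝ) : ℝ → ℝ := fun x => 1 - a * x ^ 2

lemma qmap_diff (a : ℝ) : Differentiable ℝ (qmap a) := by
  unfold qmap; fun_prop

lemma qmap_deriv (a y : ℝ) : deriv (qmap a) y = -(2*a*y) := by
  have h1 : HasDerivAt (qmap a) (-(2*a*y)) y := by
    have : HasDerivAt (fun x : ℝ => 1 - a * x ^ 2) (0 - a * (2 * y ^ 1)) y :=
      (hasDerivAt_const y 1).sub (((hasDerivAt_pow 2 y)).const_mul a)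
    unfold qmap
    exact this.congr_deriv (by ring)
  exact h1.deriv

lemma iter_diff (a : ℝ) (m : ℕ) : Differentiable ℝ ((qmap a)^[m]) :=
  (qmap_diff a).iterate m

lemma iter_deriv_succ (a x : ℝ) (m : ℕ) :
    deriv ((qmap a)^[m+1]) x = -(2*a*((qmap a)^[m] x)) * deriv ((qmap a)^[m]) x := by
  rw [Function.iterate_succ' (qmap a) m,
    deriv_comp x ((qmap_diff a).differentiableAt) ((iter_diff a m).differentiableAt),
    qmap_deriv]

lemma sq_to_abs {c D : ℝ} (hc : 0 ≤ c) (h : c^2 ≤ D^2) : c ≤ |D| := by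
  have := Real.sqrt_le_sqrt h
  rwa [Real.sqrt_sq hc, Real.sqrt_sq_eq_abs] at this


lemma step_ineq (δ a x : ℝ) (hδ : 0 < δ) (hδ7 : δ ≤ 7/10)
    (ha : 2 - δ^4/100 ≤ a) (ha2 : a ≤ 2) (hx1 : x^2 ≤ 1) (hxδ : δ^2 ≤ x^2) :
    (49/25) * max (1 - (1 - a*x^2)^2) (δ^2) ≤ 4*a^2*x^2 * max (1-x^2) (δ^2) := by
  have hδ2 : δ^2 ≤ 49/100 := by nlinarith
  have hδ4 : δ^4 ≤ 2401/10000 := by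
    have := pow_le_pow_left₀ hδ.le hδ7 4; norm_num at this; linarith
  have ha19 : (199:ℝ)/100 ≤ a := by linarith
  have haa : (199/100:ℝ)^2 ≤ a^2 := by nlinarith
  have hxpos : (0:ℝ) < x^2 := lt_of_lt_of_le (by positivity) hxδ
  have h1 : (49/25) * (1 - (1 - a*x^2)^2) ≤ 4*a^2*x^2 * max (1-x^2) (δ^2) := by
    rcases le_or_gt (δ^4/100) (1 - x^2) with h | h
    · have hp : (199/100)*(δ^4/100) ≤ a*(1-x^2) :=
        mul_le_mul ha19 h (by positivity) (by linarith)
      have hkey : 0 ≤ (51/25)*(a*(1-x^2)) - (49/25)*(2-a) := by nlinarith [hp]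
      have hmain := mul_nonneg (le_of_lt (mul_pos (by linarith : (0:ℝ) < a) hxpos)) hkey
      calc (49/25) * (1 - (1 - a*x^2)^2) ≤ 4*a^2*x^2 * (1-x^2) := by nlinarith [hmain]
        _ ≤ _ := mul_le_mul_of_nonneg_left (le_max_left _ _) (by positivity)
    · have h2ax : 2 - a*x^2 ≤ 3*δ^4/100 := by
        nlinarith [mul_le_mul_of_nonneg_right ha2 (show (0:ℝ) ≤ 1-x^2 by linarith)]
      have hq : δ^4 ≤ (49/100)*δ^2 := by
        nlinarith [mul_le_mul_of_nonneg_left hδ2 (sq_nonneg δ)]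
      have hkey : 0 ≤ 4*(a*δ^2) - (49/25)*(2-a*x^2) := by
        nlinarith [mul_le_mul_of_nonneg_right ha19 (sq_nonneg δ)]
      have hmain := mul_nonneg (le_of_lt (mul_pos (by linarith : (0:ℝ) < a) hxpos)) hkey
      calc (49/25) * (1 - (1 - a*x^2)^2) ≤ 4*a^2*x^2 * (δ^2) := by nlinarith [hmain]
        _ ≤ _ := mul_le_mul_of_nonneg_left (le_max_right _ _) (by positivity)
  have h2 : (49/25) * (δ^2) ≤ 4*a^2*x^2 * max (1-x^2) (δ^2) := by
    rcases le_or_gt (x^2) (1/2) with h | h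
    · have hprod : δ^2*(1/2) ≤ x^2*(1-x^2) :=
        mul_le_mul hxδ (by linarith) (by norm_num) (by positivity)
      have hmain := mul_le_mul haa hprod (by positivity) (by positivity)
      calc (49/25) * (δ^2) ≤ 4*a^2*x^2 * (1-x^2) := by nlinarith [hmain]
        _ ≤ _ := mul_le_mul_of_nonneg_left (le_max_left _ _) (by positivity)
    · have hmain := mul_le_mul haa h.le (by norm_num) (by positivity)
      have h49 : (49:ℝ)/25 ≤ 4*a^2*x^2 := by nlinarith [hmain]
      have hmm := mul_le_mul_of_nonneg_right h49 (sq_nonneg δ)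
      calc (49/25) * (δ^2) ≤ 4*a^2*x^2 * (δ^2) := by nlinarith [hmm]
        _ ≤ _ := mul_le_mul_of_nonneg_left (le_max_right _ _) (by positivity)
  rcases max_cases (1 - (1 - a*x^2)^2) (δ^2) with ⟨he,_⟩ | ⟨he,_⟩ <;> rw [he]
  · exact h1
  · exact h2

lemma last_ineq (δ a x : ℝ) (hδ : 0 < δ) (hδ7 : δ ≤ 7/10)
    (ha : 2 - δ^4/100 ≤ a) (ha2 : a ≤ 2) (hx1 : x^2 ≤ 1)
    (hb1 : 1 - δ < a*x^2) (hb2 : a*x^2 < 1+δ) :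
    49/25 ≤ 4*a^2*x^2 * max (1-x^2) (δ^2) := by
  have hδ2 : δ^2 ≤ 49/100 := by nlinarith
  have hδ4 : δ^4 ≤ 2401/10000 := by
    have := pow_le_pow_left₀ hδ.le hδ7 4; norm_num at this; linarith
  have key : (49:ℝ)/25 ≤ 4*a^2*x^2 * (1-x^2) := by
    have hbb : 0 ≤ (a*x^2 - (1-δ)) * ((1+δ) - a*x^2) :=
      mul_nonneg (by linarith) (by linarith)
    have hb2a : (a*x^2)*(2-a) ≤ (17/10)*(δ^4/100) :=
      mul_le_mul (by linarith) (by linarith) (by linarith) (by norm_num)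
    nlinarith [hbb, hb2a]
  calc (49:ℝ)/25 ≤ 4*a^2*x^2 * (1-x^2) := key
    _ ≤ _ := mul_le_mul_of_nonneg_left (le_max_left _ _) (by positivity)

lemma triv_ineq (δ a x : ℝ) (hδ7 : 7/10 < δ) (hδ1 : δ ≤ 1)
    (ha : 2 - (7/10:ℝ)^4/100 ≤ a) (ha2 : a ≤ 2) (hxδ : δ^2 ≤ x^2) :
    (49:ℝ)/25 ≤ 4*a^2*x^2 := by
  have haa : (19:ℝ)/10 ≤ a := by norm_num at ha ⊢; linarith
  have hx : (49:ℝ)/100 ≤ x^2 := by nlinarith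
  nlinarith [mul_le_mul (show (361:ℝ)/100 ≤ a^2 by nlinarith) hx (by norm_num) (by positivity)]

/-- Uniform expansion outside a critical neighbourhood for the quadratic family. -/
theorem uniform_expansion_outside_critical_neighbourhood :
    ∃ lam : ℝ, 1 < lam ∧
      ∀ δ : ℝ, 0 < δ →
        ∃ a₀ : ℝ, a₀ < 2 ∧
          ∀ a : ℝ, a₀ ≤ a → a ≤ 2 →
            ∀ x ∈ Icc (-1 : ℝ) 1, ∀ n : ℕ, 1 ≤ n →
              (∀ j < n, (qmap a)^[j] x ∈ Icc (-1 : ℝ) 1 \ Ioo (-δ) δ) →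
                δ * lam ^ n ≤ |deriv ((qmap a)^[n]) x| ∧
                  ((qmap a)^[n] x ∈ Ioo (-δ) δ →
                    lam ^ n ≤ |deriv ((qmap a)^[n]) x|) := by
  refine ⟨7/5, by norm_num, ?_⟩
  intro δ hδ
  have hminpos : 0 < min δ (7/10) := lt_min hδ (by norm_num)
  refine ⟨2 - (min δ (7/10))^4/100, by nlinarith [pow_pos hminpos 4], ?_⟩
  intro a ha ha2 x hx n hn H
  -- basic facts about orbit points
  have orbit : ∀ j < n, ((qmap a)^[j] x)^2 ≤ 1 ∧ δ^2 ≤ ((qmap a)^[j] x)^2 := by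
    intro j hj
    obtain ⟨hIcc, hIoo⟩ := H j hj
    constructor
    · nlinarith [hIcc.1, hIcc.2]
    · by_contra hc
      push_neg at hc
      refine hIoo (Set.mem_Ioo.mpr ⟨?_, ?_⟩) <;>
        nlinarith [sq_nonneg ((qmap a)^[j] x + δ), sq_nonneg ((qmap a)^[j] x - δ)]
  have pow_sq : ∀ m : ℕ, ((7/5:ℝ)^m)^2 = (49/25)^m := by
    intro m; rw [← pow_mul, mul_comm, pow_mul]; norm_num
  rcases le_or_gt δ (7/10) with hδ7 | hδ7
  · -- main case: δ ≤ 7/10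
    have ha' : 2 - δ^4/100 ≤ a := by rwa [min_eq_left hδ7] at ha
    have key : ∀ m, m ≤ n →
        (49/25:ℝ)^m * max (1 - ((qmap a)^[m] x)^2) (δ^2) ≤ (deriv ((qmap a)^[m]) x)^2 := by
      intro m
      induction m with
      | zero =>
        intro _
        simp only [Function.iterate_zero, id_eq, deriv_id, pow_zero, one_mul, one_pow]
        exact max_le (by nlinarith [hx.1, hx.2, sq_nonneg x]) (by nlinarith)
      | succ m ih =>
        intro h
        have hmn : m < n := Nat.lt_of_succ_le h
        obtain ⟨hy1, hyδ⟩ := orbit m hmn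
        set y := (qmap a)^[m] x with hy
        have step := step_ineq δ a y hδ hδ7 ha' ha2 hy1 hyδ
        have hit : (qmap a)^[m+1] x = 1 - a * y^2 := by
          rw [Function.iterate_succ_apply']; rfl
        rw [hit, iter_deriv_succ]
        calc (49/25:ℝ)^(m+1) * max (1 - (1 - a*y^2)^2) (δ^2)
            = (49/25:ℝ)^m * ((49/25) * max (1 - (1 - a*y^2)^2) (δ^2)) := by ring
          _ ≤ (49/25:ℝ)^m * (4*a^2*y^2 * max (1-y^2) (δ^2)) :=
              mul_le_mul_of_nonneg_left step (by positivity)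
          _ = 4*a^2*y^2 * ((49/25:ℝ)^m * max (1-y^2) (δ^2)) := by ring
          _ ≤ 4*a^2*y^2 * (deriv ((qmap a)^[m]) x)^2 :=
              mul_le_mul_of_nonneg_left (ih hmn.le) (by positivity)
          _ = (-(2*a*y) * deriv ((qmap a)^[m]) x)^2 := by ring
    constructor
    · have h1 : (49/25:ℝ)^n * δ^2 ≤ (deriv ((qmap a)^[n]) x)^2 :=
        le_trans (mul_le_mul_of_nonneg_left (le_max_right _ _) (by positivity)) (key n le_rfl)
      apply sq_to_abs (by positivity)
      calc (δ * (7/5:ℝ)^n)^2 = (49/25:ℝ)^n * δ^2 := by rw [mul_pow, pow_sq]; ring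
        _ ≤ _ := h1
    · intro hmem
      rcases n with _ | k
      · omega
      · obtain ⟨hy1, hyδ⟩ := orbit k (Nat.lt_succ_self k)
        set y := (qmap a)^[k] x with hy
        have hit : (qmap a)^[k+1] x = 1 - a * y^2 := by
          rw [Function.iterate_succ_apply']; rfl
        rw [hit] at hmem
        obtain ⟨hm1, hm2⟩ := hmem
        have last := last_ineq δ a y hδ hδ7 ha' ha2 hy1 (by linarith) (by linarith)
        have hk : (49/25:ℝ)^k * max (1 - y^2) (δ^2) ≤ (deriv ((qmap a)^[k]) x)^2 :=
          key k (Nat.le_succ k)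
        have h2 : (49/25:ℝ)^(k+1) ≤ (deriv ((qmap a)^[k+1]) x)^2 := by
          rw [iter_deriv_succ]
          calc (49/25:ℝ)^(k+1) = (49/25:ℝ)^k * (49/25) := by ring
            _ ≤ (49/25:ℝ)^k * (4*a^2*y^2 * max (1-y^2) (δ^2)) :=
                mul_le_mul_of_nonneg_left last (by positivity)
            _ = 4*a^2*y^2 * ((49/25:ℝ)^k * max (1-y^2) (δ^2)) := by ring
            _ ≤ 4*a^2*y^2 * (deriv ((qmap a)^[k]) x)^2 :=
                mul_le_mul_of_nonneg_left hk (by positivity)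
            _ = (-(2*a*y) * deriv ((qmap a)^[k]) x)^2 := by ring
        apply sq_to_abs (by positivity)
        rw [pow_sq]; exact h2
  · -- easy case: δ > 7/10
    rcases le_or_gt δ 1 with hδ1 | hδ1
    · have ha' : 2 - (7/10:ℝ)^4/100 ≤ a := by
        rwa [min_eq_right (le_of_lt hδ7)] at ha
      have key : ∀ m, m ≤ n → (49/25:ℝ)^m ≤ (deriv ((qmap a)^[m]) x)^2 := by
        intro m
        induction m with
        | zero => intro _; simp
        | succ m ih =>
          intro h
          have hmn : m < n := Nat.lt_of_succ_le h
          obtain ⟨hy1, hyδ⟩ := orbit m hmn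
          set y := (qmap a)^[m] x with hy
          have triv := triv_ineq δ a y hδ7 hδ1 ha' ha2 hyδ
          rw [iter_deriv_succ]
          calc (49/25:ℝ)^(m+1) = (49/25) * (49/25:ℝ)^m := by ring
            _ ≤ (4*a^2*y^2) * (deriv ((qmap a)^[m]) x)^2 :=
              mul_le_mul triv (ih hmn.le) (by positivity) (by positivity)
            _ = (-(2*a*y) * deriv ((qmap a)^[m]) x)^2 := by ring
      have hmain : (7/5:ℝ)^n ≤ |deriv ((qmap a)^[n]) x| := by
        apply sq_to_abs (by positivity)
        rw [pow_sq]; exact key n le_rfl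
      have hp : (0:ℝ) < (7/5:ℝ)^n := pow_pos (by norm_num) n
      refine ⟨le_trans ?_ hmain, fun _ => hmain⟩
      nlinarith [mul_nonneg (show (0:ℝ) ≤ 1-δ by linarith) hp.le]
    · exfalso
      obtain ⟨hIcc, hIoo⟩ := H 0 (by omega)
      simp only [Function.iterate_zero, id_eq] at hIcc hIoo
      exact hIoo ⟨by linarith [hIcc.1], by linarith [hIcc.2]⟩
end

section
/- There exist constants λ > 1 and C > 0 such that for every δ > 0 there exist a₀ < 2 and b₀ > 0 with the following property. Let a ∈ [a₀, 2], b ∈ (0, b₀], and let Φ be a Hénon-like map with parameters (a, b). Then for every z ∈ Q and every n ≥ 1 such that Φ^j(z) ∈ Q \ Δ for all 0 ≤ j ≤ n−1, and for every nonzero vector w ∈ ℝ² of slope at most 1/10: ‖DΦ^n(z) w‖ ≥ δ·λ^n·‖w‖, and if in addition Φ^n(z) ∈ Δ then ‖DΦ^n(z) w‖ ≥ λ^n·‖w‖. Moreover there exists a unit vector e ∈ ℝ² with ‖DΦ^n(z) e‖ ≤ (C·b)^n. -/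
open Set

/-- The plane with the Euclidean norm. -/
abbrev E2 := EuclideanSpace ℝ (Fin 2)

noncomputable section HenonAux
namespace HenonAux

set_option maxHeartbeats 1000000

def e0 : E2 := EuclideanSpace.single 0 1
def e1 : E2 := EuclideanSpace.single 1 1

lemma le_of_sq_le_sq' {x y : ℝ} (hy : 0 ≤ y) (h : x^2 ≤ y^2) (hx : 0 ≤ x) : x ≤ y := by nlinarith

lemma norm_sq_eq (V : E2) : ‖V‖^2 = (V 0)^2 + (V 1)^2 := by
  rw [EuclideanSpace.norm_eq, Real.sq_sqrt (by positivity)]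
  simp [Fin.sum_univ_two, sq_abs]

lemma comp_le_norm (V : E2) (i : Fin 2) : |V i| ≤ ‖V‖ := by
  refine le_of_sq_le_sq' (norm_nonneg V) ?_ (abs_nonneg _)
  rw [norm_sq_eq, sq_abs]
  fin_cases i
  · show V 0 ^ 2 ≤ V 0 ^ 2 + V 1 ^ 2; nlinarith [sq_nonneg (V 1)]
  · show V 1 ^ 2 ≤ V 0 ^ 2 + V 1 ^ 2; nlinarith [sq_nonneg (V 0)]

lemma norm_le_of_slope {u : E2} (h : |u 1| ≤ |u 0|/10) : ‖u‖ ≤ 1.005 * |u 0| := by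
  refine le_of_sq_le_sq' (by positivity) ?_ (norm_nonneg _)
  rw [norm_sq_eq]
  nlinarith [sq_abs (u 0), sq_abs (u 1), abs_nonneg (u 0), abs_nonneg (u 1)]

lemma decomp (u : E2) : u = u 0 • e0 + u 1 • e1 := by
  ext i
  fin_cases i <;> simp [e0, e1, EuclideanSpace.single_apply]

def dPhi (a : ℝ) (R : E2 → E2) (y : E2) : E2 →L[ℝ] E2 :=
  ((-(2*a*(y 0))) • (EuclideanSpace.proj (0 : Fin 2) : E2 →L[ℝ] ℝ)).smulRight e0 + fderiv ℝ R y

lemma psi_eq (a : ℝ) (z : E2) :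
    (WithLp.equiv 2 (Fin 2 → ℝ)).symm ![1 - a * (z 0) ^ 2, 0] = (1 - a*(z 0)^2) • e0 := by
  ext i
  fin_cases i <;>
    simp [e0, EuclideanSpace.single_apply]

lemma hasFDerivAt_phi (a : ℝ) (R : E2 → E2) (hR : ContDiff ℝ 3 R) (Φ : E2 → E2)
    (hΦ : Φ = fun z => (WithLp.equiv 2 (Fin 2 → ℝ)).symm ![1 - a * (z 0) ^ 2, 0] + R z)
    (y : E2) : HasFDerivAt Φ (dPhi a R y) y := by
  have hp : HasFDerivAt (fun z : E2 => z 0) (EuclideanSpace.proj (0 : Fin 2) : E2 →L[ℝ] ℝ) y :=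
    (EuclideanSpace.proj (0 : Fin 2) : E2 →L[ℝ] ℝ).hasFDerivAt
  have h1 : HasFDerivAt (fun z : E2 => 1 - a*(z 0)^2)
      ((-(2*a*(y 0))) • (EuclideanSpace.proj (0 : Fin 2) : E2 →L[ℝ] ℝ)) y := by
    have h := ((hp.mul hp).const_mul a).const_sub 1
    have hf : (fun z : E2 => 1 - a*(z 0)^2)
        = (fun x => 1 - a * ((fun z : E2 => z 0) * fun z : E2 => z 0) x) := by
      funext z; simp only [Pi.mul_apply]; ring
    rw [hf]
    refine h.congr_fderiv ?_
    ext w; simp; ring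
  have h2 : HasFDerivAt (fun z : E2 => (1 - a*(z 0)^2) • e0)
      (((-(2*a*(y 0))) • (EuclideanSpace.proj (0 : Fin 2) : E2 →L[ℝ] ℝ)).smulRight e0) y := by
    refine (h1.smul (hasFDerivAt_const e0 y)).congr_fderiv ?_
    simp
  have h3 := h2.add ((hR.differentiable (by norm_num)) y).hasFDerivAt
  have hfun : (fun z : E2 => (WithLp.equiv 2 (Fin 2 → ℝ)).symm ![1 - a * (z 0) ^ 2, 0] + R z)
      = fun z : E2 => (1 - a*(z 0)^2) • e0 + R z := by
    funext z; rw [psi_eq]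
  rw [hΦ, hfun]
  exact h3

lemma dPhi_apply0 (a : ℝ) (R : E2 → E2) (y u : E2) :
    (dPhi a R y u) 0 = -(2*a*(y 0))*(u 0) + (fderiv ℝ R y u) 0 := by
  simp [dPhi, e0, EuclideanSpace.single_apply]

lemma dPhi_apply1 (a : ℝ) (R : E2 → E2) (y u : E2) :
    (dPhi a R y u) 1 = (fderiv ℝ R y u) 1 := by
  simp [dPhi, e0, EuclideanSpace.single_apply]

def Pmap (a : ℝ) (R Φ : E2 → E2) (z : E2) : ℕ → (E2 →L[ℝ] E2)
  | 0 => ContinuousLinearMap.id ℝ E2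
  | (m+1) => (dPhi a R (Φ^[m] z)).comp (Pmap a R Φ z m)

lemma hasFDerivAt_iterate (a : ℝ) (R : E2 → E2) (hR : ContDiff ℝ 3 R) (Φ : E2 → E2)
    (hΦ : Φ = fun z => (WithLp.equiv 2 (Fin 2 → ℝ)).symm ![1 - a * (z 0) ^ 2, 0] + R z)
    (z : E2) : ∀ m, HasFDerivAt (Φ^[m]) (Pmap a R Φ z m) z := by
  intro m
  induction m with
  | zero => simpa [Pmap] using hasFDerivAt_id z
  | succ m ih =>
    have h := (hasFDerivAt_phi a R hR Φ hΦ (Φ^[m] z)).comp z ih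
    have : Φ^[m+1] = Φ ∘ (Φ^[m]) := Function.iterate_succ' Φ m
    rw [this]
    exact h

lemma Pmap_succ_apply (a : ℝ) (R Φ : E2 → E2) (z : E2) (m : ℕ) (w : E2) :
    Pmap a R Φ z (m+1) w = dPhi a R (Φ^[m] z) (Pmap a R Φ z m w) := rfl

lemma phi_coord (a : ℝ) (R Φ : E2 → E2)
    (hΦ : Φ = fun z => (WithLp.equiv 2 (Fin 2 → ℝ)).symm ![1 - a * (z 0) ^ 2, 0] + R z)
    (y : E2) : (Φ y) 0 = 1 - a*(y 0)^2 + (R y) 0 := by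
  rw [hΦ]
  show ((WithLp.equiv 2 (Fin 2 → ℝ)).symm ![1 - a * (y 0) ^ 2, 0] + R y) 0
      = 1 - a*(y 0)^2 + (R y) 0
  rw [psi_eq]
  simp [e0, EuclideanSpace.single_apply]

lemma keyineq (δ a b A e : ℝ) (hδ0 : 0 < δ) (hδ1 : δ ≤ 1)
    (ha0 : 2 - a ≤ δ^4/10000) (ha1 : (1.9999:ℝ) ≤ a) (ha2 : a ≤ 2) (hb : 0 < b) (hbδ : b ≤ δ^4/10000)
    (hA0 : 0 ≤ A) (hA2 : A ≤ 2) (heb : |e| ≤ b) :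
    1 - (1 - a*A^2 + e)^2 ≤ 2*a*A^2*(1-A^2) + 0.006*δ^4 := by
  have he1 := abs_le.mp heb
  have hA2u : A^2 ≤ 4 := by nlinarith [mul_self_le_mul_self hA0 hA2]
  have hA4 : A^4 ≤ 16 := by nlinarith [mul_self_le_mul_self (sq_nonneg A) hA2u]
  have h32 : a*A^4 ≤ 32 := by
    calc a*A^4 ≤ 2*16 := mul_le_mul ha2 hA4 (by positivity) (by norm_num)
    _ = 32 := by norm_num
  have hT1 : (2-a)*(a*A^4) ≤ (δ^4/10000)*32 :=
    mul_le_mul (by linarith) h32 (by positivity) (by positivity)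
  have haA2nn : (0:ℝ) ≤ a*A^2 := by positivity
  have haA2u : a*A^2 ≤ 8 := by
    calc a*A^2 ≤ 2*4 := mul_le_mul ha2 hA2u (sq_nonneg A) (by norm_num)
    _ = 8 := by norm_num
  have hT2 : -(2*(1-a*A^2)*e) ≤ 18*b := by nlinarith [he1.1, he1.2]
  have hδ4le : δ^4 ≤ 1 := pow_le_one₀ hδ0.le hδ1
  have hT3 : e^2 ≤ δ^4/10000 := by
    have h1 : e^2 ≤ b^2 := by nlinarith [mul_self_le_mul_self (abs_nonneg e) heb, sq_abs e]
    nlinarith [hδ0, pow_pos hδ0 4]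
  have hid : 1 - (1 - a*A^2 + e)^2
      = 2*a*A^2*(1-A^2) + (2-a)*(a*A^4) - 2*(1-a*A^2)*e - e^2 := by ring
  rw [hid]
  linarith [sq_nonneg e]

lemma F2low (δ a b A : ℝ) (hδ0 : 0 < δ) (ha1 : (1.9999:ℝ) ≤ a) (ha2 : a ≤ 2)
    (hb : 0 < b) (hbδ : b ≤ δ^4/10000) (hA0 : 0 ≤ A) (hA2 : A ≤ 2) :
    4*a^2*A^2 - 0.002*δ^4 ≤ (2*a*A - 1.005*b)^2 := by
  have haAu : a*A ≤ 4 := by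
    calc a*A ≤ 2*2 := mul_le_mul ha2 hA2 hA0 (by norm_num)
    _ = 4 := by norm_num
  have haAb : a*A*b ≤ 4*b := mul_le_mul_of_nonneg_right haAu hb.le
  nlinarith [sq_nonneg b, haAb, hbδ]

lemma stepB1 (δ a b A x' : ℝ) (hδ0 : 0 < δ) (ha1 : (1.9999:ℝ) ≤ a) (ha2 : a ≤ 2)
    (hkey : 1 - x'^2 ≤ 2*a*A^2*(1-A^2) + 0.006*δ^4)
    (hF2low : 4*a^2*A^2 - 0.002*δ^4 ≤ (2*a*A - 1.005*b)^2)
    (hA2d : δ^2 ≤ A^2) (hv : δ^2 ≤ 1 - A^2) :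
    1.9294*(1 - x'^2) ≤ (2*a*A - 1.005*b)^2 * (1 - A^2) := by
  have hδ2pos : 0 < δ^2 := pow_pos hδ0 2
  have hδ4pos : 0 < δ^4 := pow_pos hδ0 4
  have hvnn : (0:ℝ) ≤ 1 - A^2 := by linarith
  have hvle1 : 1 - A^2 ≤ 1 := by nlinarith [sq_nonneg A]
  have hcoef : (8.28:ℝ) ≤ 4*a^2 - 3.8588*a := by nlinarith [sq_nonneg (a - 1.9999)]
  have hA2v : δ^4 ≤ A^2*(1-A^2) := by
    nlinarith [mul_le_mul hA2d hv hδ2pos.le (sq_nonneg A)]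
  have c0 : 1.9294*(1 - x'^2) ≤ 1.9294*(2*a*A^2*(1-A^2)) + 0.011577*δ^4 := by nlinarith [hkey]
  have c1 : (4*a^2*A^2 - 0.002*δ^4) * (1-A^2) ≤ (2*a*A - 1.005*b)^2*(1-A^2) :=
    mul_le_mul_of_nonneg_right hF2low hvnn
  have c2 : 8.28*δ^4 ≤ (4*a^2 - 3.8588*a)*(A^2*(1-A^2)) :=
    mul_le_mul hcoef hA2v hδ4pos.le (by linarith)
  have c3 : 0.002*δ^4*(1-A^2) ≤ 0.002*δ^4 := by nlinarith
  nlinarith [c0, c1, c2, c3]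

lemma stepB2 (δ a b A x' : ℝ) (hδ0 : 0 < δ) (hδ : δ ≤ 1/2)
    (ha1 : (1.9999:ℝ) ≤ a) (ha2 : a ≤ 2)
    (hkey : 1 - x'^2 ≤ 2*a*A^2*(1-A^2) + 0.006*δ^4)
    (hF2low : 4*a^2*A^2 - 0.002*δ^4 ≤ (2*a*A - 1.005*b)^2)
    (hv : 1 - A^2 < δ^2) (hv0 : 0 ≤ 1 - A^2) :
    1.9294*(1 - x'^2) ≤ (2*a*A - 1.005*b)^2 * δ^2 := by
  have hδ2pos : 0 < δ^2 := pow_pos hδ0 2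
  have hδ2 : δ^2 ≤ (1:ℝ)/4 := by nlinarith
  have hδ4 : δ^4 ≤ δ^2/4 := by nlinarith [sq_nonneg δ, hδ2pos]
  have hA275 : (0.75:ℝ) ≤ A^2 := by linarith
  have hcoef : (8.28:ℝ) ≤ 4*a^2 - 3.8588*a := by nlinarith [sq_nonneg (a - 1.9999)]
  have haA2nn : (0:ℝ) ≤ 2*a*A^2 := by positivity
  have c4 : 2*a*A^2*(1-A^2) ≤ 2*a*A^2*δ^2 := mul_le_mul_of_nonneg_left hv.le haA2nn
  have hA2d2 : 0.75*δ^2 ≤ A^2*δ^2 := by nlinarith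
  have c5 : 8.28*(0.75*δ^2) ≤ (4*a^2-3.8588*a)*(A^2*δ^2) :=
    mul_le_mul hcoef hA2d2 (by positivity) (by linarith)
  have c6 : (4*a^2*A^2 - 0.002*δ^4) * δ^2 ≤ (2*a*A - 1.005*b)^2*δ^2 :=
    mul_le_mul_of_nonneg_right hF2low hδ2pos.le
  have c7 : 0.002*δ^4*δ^2 ≤ 0.002*δ^4 := by nlinarith [pow_pos hδ0 4]
  nlinarith [c4, c5, c6, c7, hkey]

lemma stepA2 (δ a b A x' : ℝ) (hδ0 : 0 < δ) (hδ : δ ≤ 1/2)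
    (ha1 : (1.9999:ℝ) ≤ a) (ha2 : a ≤ 2) (hb : 0 < b) (hbδ : b ≤ δ^4/10000)
    (hA2d : δ^2 ≤ A^2) (hA2s : A^2 ≤ 0.1225)
    (he : |x' - (1 - a*A^2)| ≤ b) :
    δ^2 < 1 - x'^2 := by
  have he1 := abs_le.mp he
  have hδ2pos : 0 < δ^2 := pow_pos hδ0 2
  have hδ2 : δ^2 ≤ (1:ℝ)/4 := by nlinarith
  have hδ4 : δ^4 ≤ δ^2/4 := by nlinarith [sq_nonneg δ]
  have hbδ2 : b ≤ δ^2/40000 := by nlinarith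
  have haA2s : a*A^2 ≤ 0.245 := by
    calc a*A^2 ≤ 2*0.1225 := mul_le_mul ha2 hA2s (sq_nonneg A) (by norm_num)
    _ = 0.245 := by norm_num
  have haA2 : 1.9999*δ^2 ≤ a*A^2 := by
    nlinarith [mul_le_mul ha1 hA2d (sq_nonneg δ) (by linarith : (0:ℝ) ≤ a)]
  have hx'lo : (0.7549:ℝ) ≤ x' := by linarith [he1.1]
  have hx'hi : x' ≤ 1 - 1.99*δ^2 := by linarith [he1.2]
  have h1mx : 1.99*δ^2 ≤ 1 - x' := by linarith
  have h1px : (1.7549:ℝ) ≤ 1 + x' := by linarith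
  have hmm := mul_le_mul h1mx h1px (by norm_num) (by linarith)
  have hxx : (1-x')*(1+x') = 1 - x'^2 := by ring
  rw [hxx] at hmm
  nlinarith [hmm, hδ2pos]

/-- per-step metric expansion (squared form) -/
lemma step_small (δ a b A x' : ℝ) (hδ0 : 0 < δ) (hδ : δ ≤ 1/2)
    (ha : 2 - δ^4/10000 ≤ a) (ha2 : a ≤ 2) (hb : 0 < b) (hbδ : b ≤ δ^4/10000)
    (hx : δ ≤ A) (hx2 : A ≤ 2) (he : |x' - (1 - a*A^2)| ≤ b) :
    1.9294 * max (1-x'^2) (δ^2) ≤ (2*a*A - 1.005*b)^2 * max (1-A^2) (δ^2) := by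
  have hδ1 : δ ≤ 1 := by linarith
  have hδ2pos : 0 < δ^2 := pow_pos hδ0 2
  have hδ2q : δ^2 ≤ 1/4 := by nlinarith [mul_self_le_mul_self hδ0.le hδ]
  have hδ4 : δ^4 ≤ δ^2/4 := by nlinarith [mul_le_mul_of_nonneg_left hδ2q hδ2pos.le]
  have ha1 : (1.9999:ℝ) ≤ a := by nlinarith [pow_le_one₀ hδ0.le hδ1 (n := 4)]
  have ha0 : 2 - a ≤ δ^4/10000 := by linarith
  have hA0 : (0:ℝ) ≤ A := by linarith
  have hA2d : δ^2 ≤ A^2 := by nlinarith [mul_self_le_mul_self hδ0.le hx]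
  have hF2 := F2low δ a b A hδ0 ha1 ha2 hb hbδ hA0 hx2
  have hkey : 1 - x'^2 ≤ 2*a*A^2*(1-A^2) + 0.006*δ^4 := by
    have h := keyineq δ a b A (x' - (1 - a*A^2)) hδ0 hδ1 ha0 ha1 ha2 hb hbδ hA0 hx2 he
    have hx'' : 1 - a*A^2 + (x' - (1 - a*A^2)) = x' := by ring
    rwa [hx''] at h
  rcases le_or_gt (1 - x'^2) (δ^2) with hc | hc
  · rw [max_eq_right hc]
    have hA35 : (0.35:ℝ) ≤ A := by
      by_contra hA
      push_neg at hA
      have hA2s : A^2 ≤ 0.1225 := by nlinarith [mul_self_le_mul_self hA0 hA.le]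
      exact absurd hc (not_le.mpr (stepA2 δ a b A x' hδ0 hδ ha1 ha2 hb hbδ hA2d hA2s he))
    have hb4 : b ≤ 0.0001 := by nlinarith [pow_le_one₀ hδ0.le hδ1 (n := 4)]
    have hFlb : (1.3998:ℝ) ≤ 2*a*A - 1.005*b := by
      have h1 : 1.9999*0.35 ≤ a*A := mul_le_mul ha1 hA35 (by norm_num) (by linarith)
      linarith
    have hF2lb : (1.9594:ℝ) ≤ (2*a*A - 1.005*b)^2 := by nlinarith [hFlb]
    have hmaxR : δ^2 ≤ max (1-A^2) (δ^2) := le_max_right _ _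
    nlinarith [mul_le_mul hF2lb hmaxR hδ2pos.le (sq_nonneg (2*a*A-1.005*b))]
  · rw [max_eq_left hc.le]
    rcases le_or_gt (δ^2) (1 - A^2) with hv | hv
    · rw [max_eq_left hv]
      exact stepB1 δ a b A x' hδ0 ha1 ha2 hkey hF2 hA2d hv
    · rw [max_eq_right hv.le]
      rcases le_or_gt 0 (1 - A^2) with hv0 | hv0
      · exact stepB2 δ a b A x' hδ0 hδ ha1 ha2 hkey hF2 hv hv0
      · exfalso
        have hneg : 2*a*A^2*(1-A^2) ≤ 0 :=
          mul_nonpos_of_nonneg_of_nonpos (by positivity) (by linarith)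
        nlinarith [hkey, hδ4]

lemma L1 : ∀ n : ℕ, (1.005:ℝ)*1.1^n ≤ 2*1.9995^n := by
  intro n
  induction n with
  | zero => norm_num
  | succ m ih =>
    rw [pow_succ, pow_succ]
    nlinarith [ih, pow_nonneg (by norm_num : (0:ℝ) ≤ 1.9995) m, pow_nonneg (by norm_num : (0:ℝ) ≤ 1.1) m]

lemma L2 : ∀ n : ℕ, 1 ≤ n → (1.005:ℝ)*1.1^n ≤ 1.9995^n := by
  intro n hn
  induction n with
  | zero => omega
  | succ m ih =>
    rcases Nat.eq_or_lt_of_le hn with h1 | h1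
    · rw [← h1]; norm_num
    · have hm : 1 ≤ m := by omega
      rw [pow_succ, pow_succ]
      nlinarith [ih hm, pow_nonneg (by norm_num : (0:ℝ) ≤ 1.9995) m, pow_nonneg (by norm_num : (0:ℝ) ≤ 1.1) m]

lemma L3 : ∀ n : ℕ, 1 ≤ n → (1.36:ℝ)*1.21^n ≤ 1.9294^n := by
  intro n hn
  induction n with
  | zero => omega
  | succ m ih =>
    rcases Nat.eq_or_lt_of_le hn with h1 | h1
    · rw [← h1]; norm_num
    · have hm : 1 ≤ m := by omega
      rw [pow_succ, pow_succ]
      nlinarith [ih hm, pow_nonneg (by norm_num : (0:ℝ) ≤ 1.9294) m, pow_nonneg (by norm_num : (0:ℝ) ≤ 1.21) m]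


/-- The core product expansion estimate for pseudo-orbits. -/
lemma core (δ a b : ℝ) (n : ℕ) (hn : 1 ≤ n) (x : ℕ → ℝ)
    (hδ0 : 0 < δ)
    (ha : 2 - (min δ 1)^4/10000 ≤ a) (ha2 : a ≤ 2)
    (hb : 0 < b) (hbδ : b ≤ (min δ 1)^4/10000)
    (hxb : ∀ j, j < n → δ < |x j| ∧ |x j| ≤ 2)
    (horb : ∀ j, j < n → |x (j+1) - (1 - a*(x j)^2)| ≤ b) :
    1.005*1.1^n*δ ≤ (∏ j ∈ Finset.range n, (2*a*|x j| - 1.005*b))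
    ∧ (|x n| ≤ δ → 1.005*1.1^n ≤ ∏ j ∈ Finset.range n, (2*a*|x j| - 1.005*b)) := by
  set d : ℝ := min δ 1 with hd
  have hd0 : 0 < d := lt_min hδ0 one_pos
  have hd1 : d ≤ 1 := min_le_right _ _
  have hdδ : d ≤ δ := min_le_left _ _
  have hd4le : d^4 ≤ d := by
    calc d^4 = d^3*d := by ring
    _ ≤ 1*d := mul_le_mul_of_nonneg_right (pow_le_one₀ hd0.le hd1) hd0.le
    _ = d := one_mul d
  have hbd : b ≤ δ/10000 := by nlinarith
  have ha1 : (1.9999:ℝ) ≤ a := by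
    have : d^4 ≤ 1 := pow_le_one₀ hd0.le hd1
    nlinarith
  have hFlb : ∀ j, j < n → 3.999*δ ≤ 2*a*|x j| - 1.005*b ∧ 3.999*|x j| ≤ 2*a*|x j| - 1.005*b := by
    intro j hj
    obtain ⟨h1, h2⟩ := hxb j hj
    have hax : 1.9999*|x j| ≤ a*|x j| :=
      mul_le_mul_of_nonneg_right ha1 (abs_nonneg _)
    constructor
    · nlinarith
    · nlinarith
  have hFpos : ∀ j, j < n → (0:ℝ) < 2*a*|x j| - 1.005*b := by
    intro j hj
    have := (hFlb j hj).1
    nlinarith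
  have hPnn : (0:ℝ) ≤ ∏ j ∈ Finset.range n, (2*a*|x j| - 1.005*b) := by
    apply Finset.prod_nonneg
    intro i hi
    exact (hFpos i (Finset.mem_range.mp hi)).le
  rcases le_or_gt (1/2 : ℝ) δ with hbig | hsmall
  · -- big δ branch
    have hprodlb : (3.999*δ)^n ≤ ∏ j ∈ Finset.range n, (2*a*|x j| - 1.005*b) := by
      have h := Finset.prod_le_prod (s := Finset.range n) (f := fun _ => 3.999*δ)
        (g := fun j => 2*a*|x j| - 1.005*b)
        (fun i _ => by positivity)
        (fun i hi => (hFlb i (Finset.mem_range.mp hi)).1)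
      rwa [Finset.prod_const, Finset.card_range] at h
    have hsplit : (3.999*δ)^n = 1.9995^n * (2*δ)^n := by
      rw [← mul_pow, show (1.9995:ℝ)*(2*δ) = 3.999*δ from by ring]
    have h2δ : (1:ℝ) ≤ 2*δ := by linarith
    constructor
    · have h1 : 2*δ ≤ (2*δ)^n := le_self_pow₀ h2δ (by omega)
      have h2 : 1.9995^n * (2*δ) ≤ 1.9995^n * (2*δ)^n :=
        mul_le_mul_of_nonneg_left h1 (by positivity)
      have := L1 n
      nlinarith [hprodlb, hsplit, pow_nonneg (by norm_num : (0:ℝ) ≤ 1.9995) n]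
    · intro _
      have h1 : (1:ℝ) ≤ (2*δ)^n := one_le_pow₀ h2δ
      have h2 : 1.9995^n * 1 ≤ 1.9995^n * (2*δ)^n :=
        mul_le_mul_of_nonneg_left h1 (by positivity)
      have := L2 n hn
      nlinarith [hprodlb, hsplit]
  · -- small δ branch : adapted metric
    have hδhalf : δ ≤ 1/2 := hsmall.le
    have hdeq : d = δ := min_eq_left (by linarith)
    rw [hdeq] at ha hbδ
    have hψ : ∀ m, m ≤ n →
        1.9294^m * (max (1-(x m)^2) (δ^2))
          ≤ (∏ j ∈ Finset.range m, (2*a*|x j| - 1.005*b))^2 * (max (1-(x 0)^2) (δ^2)) := by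
      intro m
      induction m with
      | zero => intro _; simp
      | succ m ih =>
        intro hm1
        have hm : m < n := by omega
        have ihm := ih (by omega)
        obtain ⟨hx1, hx2⟩ := hxb m hm
        have he : |x (m+1) - (1 - a*(|x m|)^2)| ≤ b := by
          rw [sq_abs]; exact horb m hm
        have hstep := step_small δ a b (|x m|) (x (m+1)) hδ0 hδhalf ha ha2 hb hbδ hx1.le hx2 he
        rw [sq_abs] at hstep
        rw [Finset.prod_range_succ, mul_pow]
        calc 1.9294^(m+1) * (max (1-(x (m+1))^2) (δ^2))
            = 1.9294^m * (1.9294 * (max (1-(x (m+1))^2) (δ^2))) := by rw [pow_succ]; ring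
        _ ≤ 1.9294^m * ((2*a*|x m| - 1.005*b)^2 * (max (1-(x m)^2) (δ^2))) :=
            mul_le_mul_of_nonneg_left hstep (by positivity)
        _ = (2*a*|x m| - 1.005*b)^2 * (1.9294^m * (max (1-(x m)^2) (δ^2))) := by ring
        _ ≤ (2*a*|x m| - 1.005*b)^2 *
              ((∏ j ∈ Finset.range m, (2*a*|x j| - 1.005*b))^2 * (max (1-(x 0)^2) (δ^2))) :=
            mul_le_mul_of_nonneg_left ihm (sq_nonneg _)
        _ = (∏ j ∈ Finset.range m, (2*a*|x j| - 1.005*b))^2 * (2*a*|x m| - 1.005*b)^2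
              * (max (1-(x 0)^2) (δ^2)) := by ring
    have hψn := hψ n le_rfl
    have hψ0 : max (1-(x 0)^2) (δ^2) ≤ 1 := by
      apply max_le
      · nlinarith [sq_nonneg (x 0)]
      · nlinarith
    have hPsq : 1.9294^n * (max (1-(x n)^2) (δ^2))
        ≤ (∏ j ∈ Finset.range n, (2*a*|x j| - 1.005*b))^2 := by
      calc 1.9294^n * (max (1-(x n)^2) (δ^2))
          ≤ (∏ j ∈ Finset.range n, (2*a*|x j| - 1.005*b))^2 * (max (1-(x 0)^2) (δ^2)) := hψn
      _ ≤ (∏ j ∈ Finset.range n, (2*a*|x j| - 1.005*b))^2 * 1 :=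
          mul_le_mul_of_nonneg_left hψ0 (sq_nonneg _)
      _ = _ := mul_one _
    have hpow : ((1.1:ℝ)^n)^2 = 1.21^n := by
      rw [← pow_mul, pow_mul']
      norm_num
    have hL3 := L3 n hn
    constructor
    · apply le_of_sq_le_sq' hPnn _ (by positivity)
      have hψnδ : δ^2 ≤ max (1-(x n)^2) (δ^2) := le_max_right _ _
      have h1 : 1.9294^n * δ^2 ≤ 1.9294^n * (max (1-(x n)^2) (δ^2)) :=
        mul_le_mul_of_nonneg_left hψnδ (by positivity)
      calc (1.005*1.1^n*δ)^2 = 1.010025 * ((1.1^n)^2) * δ^2 := by ring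
      _ = 1.010025 * 1.21^n * δ^2 := by rw [hpow]
      _ ≤ 1.9294^n * δ^2 := by nlinarith [pow_nonneg (by norm_num : (0:ℝ) ≤ 1.21) n, sq_nonneg δ]
      _ ≤ 1.9294^n * (max (1-(x n)^2) (δ^2)) := h1
      _ ≤ _ := hPsq
    · intro hxn
      apply le_of_sq_le_sq' hPnn _ (by positivity)
      have hxn2 : (x n)^2 ≤ δ^2 := by
        nlinarith [mul_self_le_mul_self (abs_nonneg (x n)) hxn, sq_abs (x n)]
      have hψnδ : (3:ℝ)/4 ≤ max (1-(x n)^2) (δ^2) := by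
        have : (3:ℝ)/4 ≤ 1-(x n)^2 := by nlinarith
        exact le_trans this (le_max_left _ _)
      have h1 : 1.9294^n * (3/4) ≤ 1.9294^n * (max (1-(x n)^2) (δ^2)) :=
        mul_le_mul_of_nonneg_left hψnδ (by positivity)
      calc ((1.005:ℝ)*1.1^n)^2 = 1.010025 * ((1.1^n)^2) := by ring
      _ = 1.010025 * 1.21^n := by rw [hpow]
      _ ≤ 1.9294^n * (3/4) := by nlinarith [pow_nonneg (by norm_num : (0:ℝ) ≤ 1.21) n]
      _ ≤ 1.9294^n * (max (1-(x n)^2) (δ^2)) := h1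
      _ ≤ _ := hPsq


end HenonAux
end HenonAux

set_option maxHeartbeats 2000000
open HenonAux

/-- Uniform hyperbolicity of Hénon-like maps outside the critical strip `Δ`:
expansion of almost horizontal vectors and existence of a strongly contracted
direction. -/
theorem henon_like_uniform_hyperbolicity_outside_Delta :
    ∃ lam C : ℝ, 1 < lam ∧ 0 < C ∧
      ∀ δ : ℝ, 0 < δ →
        ∃ a₀ : ℝ, a₀ < 2 ∧ ∃ b₀ : ℝ, 0 < b₀ ∧
          ∀ (a b : ℝ) (R : E2 → E2),
            a₀ ≤ a → a ≤ 2 → 0 < b → b ≤ b₀ →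
            ContDiff ℝ 3 R →
            (∀ z : E2, ∀ k : ℕ, k ≤ 3 → ‖iteratedFDeriv ℝ k R z‖ ≤ b) →
            ∀ Φ : E2 → E2,
              (Φ = fun z =>
                (WithLp.equiv 2 (Fin 2 → ℝ)).symm ![1 - a * (z 0) ^ 2, 0] + R z) →
              ∀ z : E2, (z 0 ∈ Icc (-2:ℝ) 2 ∧ z 1 ∈ Icc (-2:ℝ) 2) →
                ∀ n : ℕ, 1 ≤ n →
                  (∀ j < n,
                    ((Φ^[j] z) 0 ∈ Icc (-2:ℝ) 2 ∧ (Φ^[j] z) 1 ∈ Icc (-2:ℝ) 2)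
                      ∧ ¬ |(Φ^[j] z) 0| ≤ δ) →
                  (∀ w : E2, w ≠ 0 → |w 1| ≤ |w 0| / 10 →
                    δ * lam ^ n * ‖w‖ ≤ ‖fderiv ℝ (Φ^[n]) z w‖ ∧
                      (|(Φ^[n] z) 0| ≤ δ → lam ^ n * ‖w‖ ≤ ‖fderiv ℝ (Φ^[n]) z w‖)) ∧
                  ∃ e : E2, ‖e‖ = 1 ∧ ‖fderiv ℝ (Φ^[n]) z e‖ ≤ (C * b) ^ n := by
  classical
  refine ⟨1.1, 100, by norm_num, by norm_num, ?_⟩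
  intro δ hδ0
  have hd0 : 0 < min δ 1 := lt_min hδ0 one_pos
  have hd4pos : 0 < (min δ 1)^4/10000 := div_pos (pow_pos hd0 4) (by norm_num)
  refine ⟨2 - (min δ 1)^4/10000, by linarith, (min δ 1)^4/10000, hd4pos, ?_⟩
  intro a b R ha ha2 hb hbB hR hRb Φ hΦ z hzQ n hn horbQ
  -- norm bounds on R and its derivative
  have hRn : ∀ y : E2, ‖R y‖ ≤ b := by
    intro y
    have h := hRb y 0 (by norm_num)
    rwa [norm_iteratedFDeriv_zero] at h
  have hDRn : ∀ y : E2, ‖fderiv ℝ R y‖ ≤ b := by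
    intro y
    have h := hRb y 1 (by norm_num)
    rwa [show (1:ℕ) = 0+1 from rfl, ← norm_iteratedFDeriv_fderiv,
      norm_iteratedFDeriv_zero] at h
  have hIter := hasFDerivAt_iterate a R hR Φ hΦ z
  have hfd : fderiv ℝ (Φ^[n]) z = Pmap a R Φ z n := (hIter n).fderiv
  -- elementary numeric bounds
  have hd1 : min δ 1 ≤ 1 := min_le_right _ _
  have hdδ : min δ 1 ≤ δ := min_le_left _ _
  have hd4le : (min δ 1)^4 ≤ min δ 1 := by
    calc (min δ 1)^4 = (min δ 1)^3*(min δ 1) := by ring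
    _ ≤ 1*(min δ 1) := mul_le_mul_of_nonneg_right (pow_le_one₀ hd0.le hd1) hd0.le
    _ = min δ 1 := one_mul _
  have hbd : b ≤ δ/10000 := by nlinarith
  have ha1 : (1.9999:ℝ) ≤ a := by
    have h4 : (min δ 1)^4 ≤ 1 := pow_le_one₀ hd0.le hd1
    nlinarith
  -- orbit coordinates form an admissible pseudo-orbit
  have hxb : ∀ j, j < n → δ < |(Φ^[j] z) 0| ∧ |(Φ^[j] z) 0| ≤ 2 := by
    intro j hj
    obtain ⟨⟨hIcc, _⟩, hnd⟩ := horbQ j hj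
    exact ⟨not_le.mp hnd, abs_le.mpr ⟨hIcc.1, hIcc.2⟩⟩
  have horb : ∀ j, j < n → |(Φ^[j+1] z) 0 - (1 - a*((Φ^[j] z) 0)^2)| ≤ b := by
    intro j _
    have hit : (Φ^[j+1] z) = Φ (Φ^[j] z) := Function.iterate_succ_apply' Φ j z
    rw [hit, phi_coord a R Φ hΦ (Φ^[j] z)]
    have h1 : |(R (Φ^[j] z)) 0| ≤ b := le_trans (comp_le_norm _ 0) (hRn _)
    calc |1 - a*((Φ^[j] z) 0)^2 + (R (Φ^[j] z)) 0 - (1 - a*((Φ^[j] z) 0)^2)|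
        = |(R (Φ^[j] z)) 0| := by ring_nf
    _ ≤ b := h1
  have hcore := core δ a b n hn (fun j => (Φ^[j] z) 0) hδ0 ha ha2 hb hbB hxb horb
  have hc1 : 1.005*1.1^n*δ ≤ ∏ j ∈ Finset.range n, (2*a*|(Φ^[j] z) 0| - 1.005*b) := hcore.1
  -- positivity of the factors
  have hFlb : ∀ j, j < n → 3.999*δ ≤ 2*a*|(Φ^[j] z) 0| - 1.005*b := by
    intro j hj
    obtain ⟨h1, _⟩ := hxb j hj
    have hax : 1.9999*|(Φ^[j] z) 0| ≤ a*|(Φ^[j] z) 0| :=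
      mul_le_mul_of_nonneg_right ha1 (abs_nonneg _)
    nlinarith
  have hFpos : ∀ j, j < n → (0:ℝ) < 2*a*|(Φ^[j] z) 0| - 1.005*b := by
    intro j hj
    have := hFlb j hj
    nlinarith
  have hPpos : (0:ℝ) < ∏ j ∈ Finset.range n, (2*a*|(Φ^[j] z) 0| - 1.005*b) :=
    Finset.prod_pos (fun i hi => hFpos i (Finset.mem_range.mp hi))
  -- the key vector-cone induction
  have key : ∀ (w : E2), |w 1| ≤ |w 0|/10 → ∀ m, m ≤ n →
      |(Pmap a R Φ z m w) 1| ≤ |(Pmap a R Φ z m w) 0|/10 ∧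
      (∏ j ∈ Finset.range m, (2*a*|(Φ^[j] z) 0| - 1.005*b)) * |w 0|
        ≤ |(Pmap a R Φ z m w) 0| := by
    intro w hs m
    induction m with
    | zero =>
      intro _
      constructor
      · simpa [Pmap] using hs
      · simp [Pmap]
    | succ m ih =>
      intro hm1
      have hm : m < n := by omega
      obtain ⟨ihs, ihg⟩ := ih (by omega)
      have hFm := hFlb m hm
      obtain ⟨hxm1, hxm2⟩ := hxb m hm
      have hru : ‖fderiv ℝ R (Φ^[m] z) (Pmap a R Φ z m w)‖
          ≤ b * (1.005 * |(Pmap a R Φ z m w) 0|) := by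
        calc ‖fderiv ℝ R (Φ^[m] z) (Pmap a R Φ z m w)‖
            ≤ ‖fderiv ℝ R (Φ^[m] z)‖ * ‖Pmap a R Φ z m w‖ :=
              (fderiv ℝ R (Φ^[m] z)).le_opNorm _
        _ ≤ b * ‖Pmap a R Φ z m w‖ :=
              mul_le_mul_of_nonneg_right (hDRn _) (norm_nonneg _)
        _ ≤ b * (1.005 * |(Pmap a R Φ z m w) 0|) :=
              mul_le_mul_of_nonneg_left (norm_le_of_slope ihs) hb.le
      have hr0 : |(fderiv ℝ R (Φ^[m] z) (Pmap a R Φ z m w)) 0|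
          ≤ 1.005*b*|(Pmap a R Φ z m w) 0| := by
        have := le_trans (comp_le_norm _ 0) hru
        linarith
      have hr1 : |(fderiv ℝ R (Φ^[m] z) (Pmap a R Φ z m w)) 1|
          ≤ 1.005*b*|(Pmap a R Φ z m w) 0| := by
        have := le_trans (comp_le_norm _ 1) hru
        linarith
      have hu0 : (Pmap a R Φ z (m+1) w) 0
          = -(2*a*((Φ^[m] z) 0))*((Pmap a R Φ z m w) 0)
            + (fderiv ℝ R (Φ^[m] z) (Pmap a R Φ z m w)) 0 := by
        rw [Pmap_succ_apply]; exact dPhi_apply0 a R _ _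
      have hu1 : (Pmap a R Φ z (m+1) w) 1
          = (fderiv ℝ R (Φ^[m] z) (Pmap a R Φ z m w)) 1 := by
        rw [Pmap_succ_apply]; exact dPhi_apply1 a R _ _
      have h2a : |(-(2*a*((Φ^[m] z) 0)))| = 2*a*|(Φ^[m] z) 0| := by
        rw [abs_neg, abs_mul, abs_mul, abs_of_nonneg (by norm_num : (0:ℝ) ≤ 2),
          abs_of_nonneg (show (0:ℝ) ≤ a by linarith)]
      have habsA : |(-(2*a*((Φ^[m] z) 0)))*((Pmap a R Φ z m w) 0)|
          = 2*a*|(Φ^[m] z) 0| * |(Pmap a R Φ z m w) 0| := by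
        rw [abs_mul, h2a]
      have hlow : (2*a*|(Φ^[m] z) 0| - 1.005*b) * |(Pmap a R Φ z m w) 0|
          ≤ |(Pmap a R Φ z (m+1) w) 0| := by
        have htri : |(-(2*a*((Φ^[m] z) 0)))*((Pmap a R Φ z m w) 0)|
            ≤ |(Pmap a R Φ z (m+1) w) 0|
              + |(fderiv ℝ R (Φ^[m] z) (Pmap a R Φ z m w)) 0| := by
          rw [hu0]
          have := abs_add_le
            (-(2*a*((Φ^[m] z) 0))*((Pmap a R Φ z m w) 0)
              + (fderiv ℝ R (Φ^[m] z) (Pmap a R Φ z m w)) 0)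
            (-((fderiv ℝ R (Φ^[m] z) (Pmap a R Φ z m w)) 0))
          simp only [abs_neg] at this
          calc |(-(2*a*((Φ^[m] z) 0)))*((Pmap a R Φ z m w) 0)|
              = |(-(2*a*((Φ^[m] z) 0))*((Pmap a R Φ z m w) 0)
                  + (fderiv ℝ R (Φ^[m] z) (Pmap a R Φ z m w)) 0)
                  + (-((fderiv ℝ R (Φ^[m] z) (Pmap a R Φ z m w)) 0))| := by congr 1; ring
          _ ≤ _ := this
        rw [habsA] at htri
        nlinarith [hr0]
      constructor
      · -- the slope stays small
        have hstep1 : |(Pmap a R Φ z (m+1) w) 1| ≤ 1.005*b*|(Pmap a R Φ z m w) 0| := by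
          rw [hu1]; exact hr1
        have hg1 : 3.999*δ*|(Pmap a R Φ z m w) 0| ≤ |(Pmap a R Φ z (m+1) w) 0| := by
          have := mul_le_mul_of_nonneg_right hFm (abs_nonneg ((Pmap a R Φ z m w) 0))
          linarith
        have hb10 : 10*(1.005*b) ≤ 3.999*δ := by nlinarith
        have := mul_le_mul_of_nonneg_right hb10 (abs_nonneg ((Pmap a R Φ z m w) 0))
        linarith
      · -- the growth of the first component
        rw [Finset.prod_range_succ]
        have h1 : (∏ j ∈ Finset.range m, (2*a*|(Φ^[j] z) 0| - 1.005*b))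
              * (2*a*|(Φ^[m] z) 0| - 1.005*b) * |w 0|
            = (2*a*|(Φ^[m] z) 0| - 1.005*b)
              * ((∏ j ∈ Finset.range m, (2*a*|(Φ^[j] z) 0| - 1.005*b)) * |w 0|) := by ring
        rw [h1]
        calc (2*a*|(Φ^[m] z) 0| - 1.005*b)
              * ((∏ j ∈ Finset.range m, (2*a*|(Φ^[j] z) 0| - 1.005*b)) * |w 0|)
            ≤ (2*a*|(Φ^[m] z) 0| - 1.005*b) * |(Pmap a R Φ z m w) 0| :=
              mul_le_mul_of_nonneg_left ihg (le_of_lt (hFpos m hm))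
        _ ≤ |(Pmap a R Φ z (m+1) w) 0| := hlow
  refine ⟨?_, ?_⟩
  · -- expansion of almost horizontal vectors
    intro w hwne hws
    have hkey := key w hws n le_rfl
    have hnw : ‖w‖ ≤ 1.005*|w 0| := norm_le_of_slope hws
    have h0n : |(Pmap a R Φ z n w) 0| ≤ ‖Pmap a R Φ z n w‖ := comp_le_norm _ 0
    rw [hfd]
    constructor
    · calc δ*1.1^n*‖w‖ ≤ δ*1.1^n*(1.005*|w 0|) := by
            apply mul_le_mul_of_nonneg_left hnw (by positivity)
      _ = (1.005*1.1^n*δ)*|w 0| := by ring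
      _ ≤ (∏ j ∈ Finset.range n, (2*a*|(Φ^[j] z) 0| - 1.005*b))*|w 0| :=
            mul_le_mul_of_nonneg_right hc1 (abs_nonneg _)
      _ ≤ |(Pmap a R Φ z n w) 0| := hkey.2
      _ ≤ ‖Pmap a R Φ z n w‖ := h0n
    · intro hxn
      have hc2 : 1.005*1.1^n ≤ ∏ j ∈ Finset.range n, (2*a*|(Φ^[j] z) 0| - 1.005*b) :=
        hcore.2 hxn
      calc (1.1:ℝ)^n*‖w‖ ≤ 1.1^n*(1.005*|w 0|) := by
            apply mul_le_mul_of_nonneg_left hnw (by positivity)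
      _ = (1.005*1.1^n)*|w 0| := by ring
      _ ≤ (∏ j ∈ Finset.range n, (2*a*|(Φ^[j] z) 0| - 1.005*b))*|w 0| :=
            mul_le_mul_of_nonneg_right hc2 (abs_nonneg _)
      _ ≤ |(Pmap a R Φ z n w) 0| := hkey.2
      _ ≤ ‖Pmap a R Φ z n w‖ := h0n
  · -- the strongly contracted direction
    have he0c : (e0 : E2) 0 = 1 := by simp [e0, EuclideanSpace.single_apply]
    have he0c1 : (e0 : E2) 1 = 0 := by simp [e0, EuclideanSpace.single_apply]
    have he1c : (e1 : E2) 0 = 0 := by simp [e1, EuclideanSpace.single_apply]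
    have he1c1 : (e1 : E2) 1 = 1 := by simp [e1, EuclideanSpace.single_apply]
    have hkey0 := key e0 (by rw [he0c, he0c1]; norm_num) n le_rfl
    have hp : (∏ j ∈ Finset.range n, (2*a*|(Φ^[j] z) 0| - 1.005*b))
        ≤ |(Pmap a R Φ z n e0) 0| := by
      have := hkey0.2
      rwa [he0c, abs_one, mul_one] at this
    -- determinant recursion
    have hent : ∀ (y : E2) (k : Fin 2) (u : E2), ‖u‖ = 1 →
        |(fderiv ℝ R y u) k| ≤ b := by
      intro y k u hu
      calc |(fderiv ℝ R y u) k| ≤ ‖fderiv ℝ R y u‖ := comp_le_norm _ k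
      _ ≤ ‖fderiv ℝ R y‖ * ‖u‖ := (fderiv ℝ R y).le_opNorm u
      _ = ‖fderiv ℝ R y‖ := by rw [hu, mul_one]
      _ ≤ b := hDRn y
    have hne0 : ‖(e0 : E2)‖ = 1 := by
      rw [show (e0 : E2) = EuclideanSpace.single 0 1 from rfl, EuclideanSpace.norm_single]
      norm_num
    have hne1 : ‖(e1 : E2)‖ = 1 := by
      rw [show (e1 : E2) = EuclideanSpace.single 1 1 from rfl, EuclideanSpace.norm_single]
      norm_num
    have hlin : ∀ (y u : E2), dPhi a R y u
        = u 0 • (dPhi a R y e0) + u 1 • (dPhi a R y e1) := by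
      intro y u
      conv_lhs => rw [decomp u]
      rw [map_add, map_smul, map_smul]
    have hdet : ∀ m, m ≤ n →
        |(Pmap a R Φ z m e0) 0 * (Pmap a R Φ z m e1) 1
          - (Pmap a R Φ z m e0) 1 * (Pmap a R Φ z m e1) 0|
        ≤ (100*b)^m * ∏ j ∈ Finset.range m, (2*a*|(Φ^[j] z) 0| - 1.005*b) := by
      intro m
      induction m with
      | zero =>
        intro _
        simp [Pmap, he0c, he0c1, he1c, he1c1]
      | succ m ih =>
        intro hm1
        have hm : m < n := by omega
        have ihm := ih (by omega)
        obtain ⟨hxm1, hxm2⟩ := hxb m hm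
        -- entries of the one-step derivative
        have hA00 : (dPhi a R (Φ^[m] z) e0) 0
            = -(2*a*((Φ^[m] z) 0)) + (fderiv ℝ R (Φ^[m] z) e0) 0 := by
          rw [dPhi_apply0, he0c]; ring
        have hA01 : (dPhi a R (Φ^[m] z) e1) 0
            = (fderiv ℝ R (Φ^[m] z) e1) 0 := by
          rw [dPhi_apply0, he1c]; ring
        have hA10 : (dPhi a R (Φ^[m] z) e0) 1 = (fderiv ℝ R (Φ^[m] z) e0) 1 :=
          dPhi_apply1 a R _ _
        have hA11 : (dPhi a R (Φ^[m] z) e1) 1 = (fderiv ℝ R (Φ^[m] z) e1) 1 :=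
          dPhi_apply1 a R _ _
        have hb00 : |(fderiv ℝ R (Φ^[m] z) e0) 0| ≤ b := hent _ 0 e0 hne0
        have hb01 : |(fderiv ℝ R (Φ^[m] z) e1) 0| ≤ b := hent _ 0 e1 hne1
        have hb10 : |(fderiv ℝ R (Φ^[m] z) e0) 1| ≤ b := hent _ 1 e0 hne0
        have hb11 : |(fderiv ℝ R (Φ^[m] z) e1) 1| ≤ b := hent _ 1 e1 hne1
        have hdstep : |(dPhi a R (Φ^[m] z) e0) 0 * (dPhi a R (Φ^[m] z) e1) 1
              - (dPhi a R (Φ^[m] z) e0) 1 * (dPhi a R (Φ^[m] z) e1) 0|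
            ≤ 100*b*(2*a*|(Φ^[m] z) 0| - 1.005*b) := by
          rw [hA00, hA01, hA10, hA11]
          have t1 : |(-(2*a*((Φ^[m] z) 0)) + (fderiv ℝ R (Φ^[m] z) e0) 0)|
              ≤ 2*a*|(Φ^[m] z) 0| + b := by
            have := abs_add_le (-(2*a*((Φ^[m] z) 0))) ((fderiv ℝ R (Φ^[m] z) e0) 0)
            have h2 : |(-(2*a*((Φ^[m] z) 0)))| = 2*a*|(Φ^[m] z) 0| := by
              rw [abs_neg, abs_mul, abs_mul,
                abs_of_nonneg (by norm_num : (0:ℝ) ≤ 2),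
                abs_of_nonneg (by linarith : (0:ℝ) ≤ a)]
            linarith
          have t2 : |(-(2*a*((Φ^[m] z) 0)) + (fderiv ℝ R (Φ^[m] z) e0) 0)
                * (fderiv ℝ R (Φ^[m] z) e1) 1|
              ≤ (2*a*|(Φ^[m] z) 0| + b) * b := by
            rw [abs_mul]
            apply mul_le_mul t1 hb11 (abs_nonneg _)
            positivity
          have t3 : |(fderiv ℝ R (Φ^[m] z) e0) 1 * (fderiv ℝ R (Φ^[m] z) e1) 0|
              ≤ b*b := by
            rw [abs_mul]
            exact mul_le_mul hb10 hb01 (abs_nonneg _) hb.le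
          have t4 := abs_sub
            ((-(2*a*((Φ^[m] z) 0)) + (fderiv ℝ R (Φ^[m] z) e0) 0)
              * (fderiv ℝ R (Φ^[m] z) e1) 1)
            ((fderiv ℝ R (Φ^[m] z) e0) 1 * (fderiv ℝ R (Φ^[m] z) e1) 0)
          have hax : 1.9999*δ ≤ a*|(Φ^[m] z) 0| := by
            nlinarith [mul_le_mul_of_nonneg_right ha1 (abs_nonneg ((Φ^[m] z) 0))]
          nlinarith [t2, t3, t4]
        -- multiplicativity of the 2×2 determinant
        have hdmul : (Pmap a R Φ z (m+1) e0) 0 * (Pmap a R Φ z (m+1) e1) 1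
              - (Pmap a R Φ z (m+1) e0) 1 * (Pmap a R Φ z (m+1) e1) 0
            = ((dPhi a R (Φ^[m] z) e0) 0 * (dPhi a R (Φ^[m] z) e1) 1
              - (dPhi a R (Φ^[m] z) e0) 1 * (dPhi a R (Φ^[m] z) e1) 0)
              * ((Pmap a R Φ z m e0) 0 * (Pmap a R Φ z m e1) 1
              - (Pmap a R Φ z m e0) 1 * (Pmap a R Φ z m e1) 0) := by
          have q0 : Pmap a R Φ z (m+1) e0 = dPhi a R (Φ^[m] z) (Pmap a R Φ z m e0) := rfl
          have q1 : Pmap a R Φ z (m+1) e1 = dPhi a R (Φ^[m] z) (Pmap a R Φ z m e1) := rfl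
          rw [q0, q1, hlin _ (Pmap a R Φ z m e0), hlin _ (Pmap a R Φ z m e1)]
          simp only [PiLp.add_apply, PiLp.smul_apply, smul_eq_mul]
          ring
        rw [hdmul, abs_mul, pow_succ, Finset.prod_range_succ]
        calc |(dPhi a R (Φ^[m] z) e0) 0 * (dPhi a R (Φ^[m] z) e1) 1
              - (dPhi a R (Φ^[m] z) e0) 1 * (dPhi a R (Φ^[m] z) e1) 0|
              * |(Pmap a R Φ z m e0) 0 * (Pmap a R Φ z m e1) 1
              - (Pmap a R Φ z m e0) 1 * (Pmap a R Φ z m e1) 0|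
            ≤ (100*b*(2*a*|(Φ^[m] z) 0| - 1.005*b))
              * ((100*b)^m * ∏ j ∈ Finset.range m, (2*a*|(Φ^[j] z) 0| - 1.005*b)) := by
              apply mul_le_mul hdstep ihm (abs_nonneg _)
              exact mul_nonneg (by positivity) (hFpos m hm).le
        _ = (100*b)^m*(100*b)
              * ((∏ j ∈ Finset.range m, (2*a*|(Φ^[j] z) 0| - 1.005*b))
                * (2*a*|(Φ^[m] z) 0| - 1.005*b)) := by ring
    have hdetn := hdet n le_rfl
    set p := (Pmap a R Φ z n e0) 0 with hpdef
    set q := (Pmap a R Φ z n e0) 1 with hqdef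
    set r := (Pmap a R Φ z n e1) 0 with hrdef
    set s := (Pmap a R Φ z n e1) 1 with hsdef
    have hppos : 0 < |p| := lt_of_lt_of_le hPpos hp
    have hDp : |p*s - q*r| ≤ (100*b)^n * |p| := by
      calc |p*s - q*r| ≤ (100*b)^n * ∏ j ∈ Finset.range n, (2*a*|(Φ^[j] z) 0| - 1.005*b) :=
            hdetn
      _ ≤ (100*b)^n * |p| := mul_le_mul_of_nonneg_left hp (by positivity)
    set evec : E2 := (WithLp.equiv 2 (Fin 2 → ℝ)).symm ![-(p*r+q*s), p^2+q^2] with hevdef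
    have hev0 : evec 0 = -(p*r+q*s) := rfl
    have hev1 : evec 1 = p^2+q^2 := rfl
    have hSpos : 0 < p^2+q^2 := by nlinarith [pow_pos hppos 2, sq_abs p, sq_nonneg q]
    have hevnorm : p^2+q^2 ≤ ‖evec‖ := by
      calc p^2+q^2 = |evec 1| := by rw [hev1]; exact (abs_of_pos hSpos).symm
      _ ≤ ‖evec‖ := comp_le_norm evec 1
    have hevpos : 0 < ‖evec‖ := lt_of_lt_of_le hSpos hevnorm
    have hMev : Pmap a R Φ z n evec
        = evec 0 • (Pmap a R Φ z n e0) + evec 1 • (Pmap a R Φ z n e1) := by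
      conv_lhs => rw [decomp evec]
      rw [map_add, map_smul, map_smul]
    have hV0 : (Pmap a R Φ z n evec) 0 = -(p*r+q*s)*p + (p^2+q^2)*r := by
      rw [hMev]
      simp only [PiLp.add_apply, PiLp.smul_apply, smul_eq_mul]
      rw [hev0, hev1]
    have hV1 : (Pmap a R Φ z n evec) 1 = -(p*r+q*s)*q + (p^2+q^2)*s := by
      rw [hMev]
      simp only [PiLp.add_apply, PiLp.smul_apply, smul_eq_mul]
      rw [hev0, hev1]
    have hVle : ‖Pmap a R Φ z n evec‖ ≤ |p*s - q*r| * Real.sqrt (p^2+q^2) := by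
      refine le_of_sq_le_sq' (by positivity) ?_ (norm_nonneg _)
      rw [mul_pow, sq_abs, Real.sq_sqrt hSpos.le, norm_sq_eq, hV0, hV1]
      have : (-(p*r+q*s)*p + (p^2+q^2)*r)^2 + (-(p*r+q*s)*q + (p^2+q^2)*s)^2
          = (p*s-q*r)^2*(p^2+q^2) := by ring
      linarith [this.le]
    have hsqp : |p| ≤ Real.sqrt (p^2+q^2) := by
      rw [show |p| = Real.sqrt (p^2) from (Real.sqrt_sq_eq_abs p).symm]
      exact Real.sqrt_le_sqrt (by nlinarith [sq_nonneg q])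
    have hchain : ‖Pmap a R Φ z n evec‖ ≤ (100*b)^n * ‖evec‖ := by
      calc ‖Pmap a R Φ z n evec‖ ≤ |p*s - q*r| * Real.sqrt (p^2+q^2) := hVle
      _ ≤ ((100*b)^n * |p|) * Real.sqrt (p^2+q^2) :=
            mul_le_mul_of_nonneg_right hDp (Real.sqrt_nonneg _)
      _ = (100*b)^n * (|p| * Real.sqrt (p^2+q^2)) := by ring
      _ ≤ (100*b)^n * (Real.sqrt (p^2+q^2) * Real.sqrt (p^2+q^2)) := by
            apply mul_le_mul_of_nonneg_left
              (mul_le_mul_of_nonneg_right hsqp (Real.sqrt_nonneg _)) (by positivity)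
      _ = (100*b)^n * (p^2+q^2) := by rw [Real.mul_self_sqrt hSpos.le]
      _ ≤ (100*b)^n * ‖evec‖ := mul_le_mul_of_nonneg_left hevnorm (by positivity)
    refine ⟨‖evec‖⁻¹ • evec, ?_, ?_⟩
    · rw [norm_smul, norm_inv, norm_norm]
      exact inv_mul_cancel₀ hevpos.ne'
    · rw [hfd]
      have hsm : Pmap a R Φ z n (‖evec‖⁻¹ • evec) = ‖evec‖⁻¹ • (Pmap a R Φ z n evec) :=
        map_smul _ _ _
      rw [hsm, norm_smul, norm_inv, norm_norm]
      have h100 : ((100:ℝ)*b)^n = (100*b)^n := rfl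
      calc ‖evec‖⁻¹ * ‖Pmap a R Φ z n evec‖
          ≤ ‖evec‖⁻¹ * ((100*b)^n * ‖evec‖) :=
            mul_le_mul_of_nonneg_left hchain (by positivity)
      _ = (100*b)^n := by field_simp
end

section
/- Let δ ∈ (0,1), a ∈ [1,2] and b > 0 with b ≤ δ²/10. Let Φ(x,y) = (1 − a x², 0) + R(x,y), where R : ℝ² → ℝ² is continuously differentiable with all first-order partial derivatives bounded in absolute value by b. Let z = (x,y) be a point with |x| ≥ δ. Then every unit vector e = (e₁, e₂) ∈ ℝ² that minimizes ‖DΦ(z) e‖ over all unit vectors satisfies |e₁| ≤ 2b/δ; that is, the most contracted direction of DΦ(z) is within angle of order b/δ of the vertical direction. -/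
set_option maxHeartbeats 1000000

/-- Outside the critical strip, the most contracted direction of the derivative of a
Hénon-like map is within angle of order `b/δ` of the vertical direction. -/
theorem most_contracted_direction_nearly_vertical
    (δ a b : ℝ) (hδ : δ ∈ Set.Ioo (0:ℝ) 1) (ha : a ∈ Set.Icc (1:ℝ) 2)
    (hb : 0 < b) (hbδ : b ≤ δ ^ 2 / 10)
    (R : E2 → E2) (hR : ContDiff ℝ 1 R)
    (hRb : ∀ z : E2, ∀ i j : Fin 2, |fderiv ℝ R z (EuclideanSpace.single i 1) j| ≤ b)
    (Φ : E2 → E2)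
    (hΦ : Φ = fun z =>
      (WithLp.equiv 2 (Fin 2 → ℝ)).symm ![1 - a * (z 0) ^ 2, 0] + R z)
    (z : E2) (hz : δ ≤ |z 0|)
    (e : E2) (he : ‖e‖ = 1)
    (hmin : ∀ v : E2, ‖v‖ = 1 → ‖fderiv ℝ Φ z e‖ ≤ ‖fderiv ℝ Φ z v‖) :
    |e 0| ≤ 2 * b / δ := by
  obtain ⟨hδ0, hδ1⟩ := hδ
  obtain ⟨ha1, ha2⟩ := ha
  -- coordinate estimates in the Euclidean plane
  have habs : ∀ w : E2, ∀ i : Fin 2, |w i| ≤ ‖w‖ := by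
    intro w i
    rw [EuclideanSpace.norm_eq]
    have h : |w i| = Real.sqrt (‖w i‖^2) := by
      rw [Real.sqrt_sq (norm_nonneg _)]; exact (Real.norm_eq_abs _).symm
    rw [h]
    apply Real.sqrt_le_sqrt
    exact Finset.single_le_sum (f := fun j => ‖w j‖^2) (fun j _ => by positivity)
      (Finset.mem_univ i)
  have hnorm_le : ∀ w : E2, ‖w‖ ≤ |w 0| + |w 1| := by
    intro w
    rw [EuclideanSpace.norm_eq, Fin.sum_univ_two]
    have h : ‖w 0‖^2 + ‖w 1‖^2 ≤ (|w 0| + |w 1|)^2 := by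
      simp only [Real.norm_eq_abs]; nlinarith [abs_nonneg (w 0), abs_nonneg (w 1)]
    calc Real.sqrt (‖w 0‖^2 + ‖w 1‖^2) ≤ Real.sqrt ((|w 0| + |w 1|)^2) := Real.sqrt_le_sqrt h
      _ = |w 0| + |w 1| := Real.sqrt_sq (by positivity)
  have hdecomp : ∀ v : E2, v = v 0 • EuclideanSpace.single (0:Fin 2) (1:ℝ)
      + v 1 • EuclideanSpace.single (1:Fin 2) (1:ℝ) := by
    intro v; ext i
    fin_cases i <;> simp [EuclideanSpace.single_apply]
  -- the derivative of Φ
  have hp : HasFDerivAt (fun w : E2 => w 0) (EuclideanSpace.proj (0:Fin 2) : E2 →L[ℝ] ℝ) z :=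
    (EuclideanSpace.proj (0:Fin 2) : E2 →L[ℝ] ℝ).hasFDerivAt
  have hh := ((hp.mul hp).const_mul a).const_sub 1
  have hf := hh.smul_const (EuclideanSpace.single (0:Fin 2) (1:ℝ))
  have hRd : HasFDerivAt R (fderiv ℝ R z) z := ((hR.differentiable one_ne_zero) z).hasFDerivAt
  have hfun : Φ = fun w : E2 =>
      (1 - a * (w 0 * w 0)) • EuclideanSpace.single (0:Fin 2) (1:ℝ) + R w := by
    rw [hΦ]; funext w; congr 1; ext i
    fin_cases i <;> simp [EuclideanSpace.single_apply, sq]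
  have hΦd : HasFDerivAt (fun w : E2 =>
      (1 - a * (w 0 * w 0)) • EuclideanSpace.single (0:Fin 2) (1:ℝ) + R w) _ z := (hf.add hRd)
  rw [← hfun] at hΦd
  have hkey0 : ∀ v : E2, fderiv ℝ Φ z v 0 = -(a * (2 * z 0 * v 0)) + fderiv ℝ R z v 0 := by
    intro v
    rw [hΦd.fderiv]
    simp [EuclideanSpace.single_apply]
    ring
  have hkey1 : ∀ v : E2, fderiv ℝ Φ z v 1 = fderiv ℝ R z v 1 := by
    intro v
    rw [hΦd.fderiv]
    simp [EuclideanSpace.single_apply]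
  -- components of the derivative of R
  have hDR : ∀ v : E2, ∀ i : Fin 2, fderiv ℝ R z v i =
      v 0 * fderiv ℝ R z (EuclideanSpace.single (0:Fin 2) (1:ℝ)) i
      + v 1 * fderiv ℝ R z (EuclideanSpace.single (1:Fin 2) (1:ℝ)) i := by
    intro v i
    conv_lhs => rw [hdecomp v]
    rw [map_add, map_smul, map_smul]
    simp
  -- upper bound via the vertical test vector
  set s1 : E2 := EuclideanSpace.single (1:Fin 2) (1:ℝ) with hs1
  have hs1norm : ‖s1‖ = 1 := by
    rw [hs1, EuclideanSpace.norm_single]; simp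
  have hs10 : s1 0 = 0 := by rw [hs1]; simp [EuclideanSpace.single_apply]
  have hupper : ‖fderiv ℝ Φ z s1‖ ≤ 2 * b := by
    refine le_trans (hnorm_le _) ?_
    have h0 : fderiv ℝ Φ z s1 0 = fderiv ℝ R z s1 0 := by
      rw [hkey0, hs10]; ring
    have h1 : fderiv ℝ Φ z s1 1 = fderiv ℝ R z s1 1 := hkey1 s1
    rw [h0, h1]
    have := hRb z 1 0
    have := hRb z 1 1
    rw [hs1]; linarith
  have hMe : ‖fderiv ℝ Φ z e‖ ≤ 2 * b := le_trans (hmin s1 hs1norm) hupper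
  -- lower bound on the first component
  have he0 : |e 0| ≤ 1 := by rw [← he]; exact habs e 0
  have he1 : |e 1| ≤ 1 := by rw [← he]; exact habs e 1
  set r00 := fderiv ℝ R z (EuclideanSpace.single (0:Fin 2) (1:ℝ)) 0 with hr00
  set r01 := fderiv ℝ R z (EuclideanSpace.single (1:Fin 2) (1:ℝ)) 0 with hr01
  have hb00 : |r00| ≤ b := hRb z 0 0
  have hb01 : |r01| ≤ b := hRb z 1 0
  have heq : fderiv ℝ Φ z e 0 = -(a * (2 * z 0 * e 0)) + (e 0 * r00 + e 1 * r01) := by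
    rw [hkey0, hDR e 0]
  have hA : |a * (2 * z 0 * e 0)| = 2 * a * |z 0| * |e 0| := by
    rw [abs_mul, abs_mul, abs_mul, abs_of_nonneg (by linarith : (0:ℝ) ≤ a)]
    simp [abs_two]; ring
  have hB : |e 0 * r00 + e 1 * r01| ≤ b * |e 0| + b * |e 1| := by
    refine le_trans (abs_add_le _ _) ?_
    rw [abs_mul, abs_mul]
    have h1 : |e 0| * |r00| ≤ |e 0| * b := by
      exact mul_le_mul_of_nonneg_left hb00 (abs_nonneg _)
    have h2 : |e 1| * |r01| ≤ |e 1| * b := by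
      exact mul_le_mul_of_nonneg_left hb01 (abs_nonneg _)
    linarith
  have hlow : 2 * a * |z 0| * |e 0| - (b * |e 0| + b * |e 1|) ≤ |fderiv ℝ Φ z e 0| := by
    rw [heq]
    have h := abs_sub_abs_le_abs_sub (a * (2 * z 0 * e 0)) (e 0 * r00 + e 1 * r01)
    have h2 : |a * (2 * z 0 * e 0) - (e 0 * r00 + e 1 * r01)|
        = |-(a * (2 * z 0 * e 0)) + (e 0 * r00 + e 1 * r01)| := by
      rw [← abs_neg]; ring_nf
    rw [hA] at h
    rw [← h2]
    linarith
  have hcomp : |fderiv ℝ Φ z e 0| ≤ ‖fderiv ℝ Φ z e‖ := habs _ 0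
  -- putting it all together
  have hmain : 2 * a * |z 0| * |e 0| - (b * |e 0| + b * |e 1|) ≤ 2 * b := by
    linarith
  clear hlow hcomp heq hMe hupper hkey0 hkey1 hDR hΦd hf hh hfun hp hRd
  clear hdecomp habs hnorm_le hmin hΦ hRb hb00 hb01 hs1norm hs10 hB hA
  have hax : δ ≤ a * |z 0| := by nlinarith [abs_nonneg (z 0)]
  have h2 : 2 * δ * |e 0| ≤ 2 * a * |z 0| * |e 0| := by
    nlinarith [abs_nonneg (e 0)]
  have hbδ' : b ≤ δ / 10 := by nlinarith
  have hbe0 : b * |e 0| ≤ (δ / 10) * |e 0| :=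
    mul_le_mul_of_nonneg_right hbδ' (abs_nonneg _)
  rw [le_div_iff₀ hδ0]
  nlinarith [abs_nonneg (e 0)]
end

section
/- For every ε > 0 there exists a positive integer m₀ such that for every integer m ≥ m₀ and every integer R ≥ m, the number of finite sequences ((r₁, m₁), …, (r_t, m_t)), where t ≥ 1 is arbitrary, each r_i is a nonzero integer with |r_i| ≥ m, |r₁| + ⋯ + |r_t| = R, and each m_i is an integer with 1 ≤ m_i ≤ r_i², is at most e^{ε·R}. -/
open Finset

/-- The set of (possibly empty) essential-return-data lists with total depth `R`. -/
def RetSeqSet (m R : ℕ) : Set (List (ℤ × ℤ)) :=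
  {L | (∀ p ∈ L, p.1 ≠ 0 ∧ (m : ℤ) ≤ |p.1| ∧ 1 ≤ p.2 ∧ p.2 ≤ p.1 ^ 2) ∧
    (L.map (fun p => p.1.natAbs)).sum = R}

lemma PSet_key (m : ℕ) (hm : 1 ≤ m) (ε : ℝ)
    (htail : ∀ R : ℕ, ∑ k ∈ Finset.Icc m R,
      2 * (k : ℝ) ^ 2 * Real.exp (-(ε * k)) ≤ 1) :
    ∀ R : ℕ, (RetSeqSet m R).Finite ∧ ((RetSeqSet m R).ncard : ℝ) ≤ Real.exp (ε * R) := by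
  intro R
  induction R using Nat.strong_induction_on with
  | _ R IH =>
    rcases Nat.eq_zero_or_pos R with hR | hR
    · subst hR
      have hsub : RetSeqSet m 0 ⊆ {([] : List (ℤ × ℤ))} := by
        rintro L ⟨h1, h2⟩
        cases L with
        | nil => rfl
        | cons p L' =>
          exfalso
          have hp := h1 p (List.mem_cons_self)
          have habs : (m : ℤ) ≤ |p.1| := hp.2.1
          have : (1 : ℤ) ≤ |p.1| := le_trans (by exact_mod_cast hm) habs
          have h0 : 1 ≤ p.1.natAbs := by
            rw [Int.abs_eq_natAbs] at this; exact_mod_cast this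
          simp only [List.map_cons, List.sum_cons] at h2
          omega
      have hfin : (RetSeqSet m 0).Finite := (Set.finite_singleton _).subset hsub
      refine ⟨hfin, ?_⟩
      have := Set.ncard_le_ncard hsub (Set.finite_singleton _)
      simp only [Set.ncard_singleton] at this
      calc ((RetSeqSet m 0).ncard : ℝ) ≤ 1 := by exact_mod_cast this
        _ ≤ Real.exp (ε * (0 : ℕ)) := by norm_num
    · -- R ≥ 1 : decompose by the first element
      set F : ℕ → Finset (ℤ × ℤ) :=
        fun k => ({(k : ℤ), -(k : ℤ)} : Finset ℤ) ×ˢ Finset.Icc 1 ((k : ℤ) ^ 2) with hF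
      have hT : ∀ k, m ≤ k → k ≤ R → (RetSeqSet m (R - k)).Finite :=
        fun k h1 h2 => (IH (R - k) (by omega)).1
      set T : ℕ → Finset (List (ℤ × ℤ)) :=
        fun k => if h : m ≤ k ∧ k ≤ R then (hT k h.1 h.2).toFinset else ∅ with hTdef
      set G : ℕ → Finset (List (ℤ × ℤ)) :=
        fun k => (F k ×ˢ T k).image (fun x => x.1 :: x.2) with hG
      set B : Finset (List (ℤ × ℤ)) := (Finset.Icc m R).biUnion G with hB
      have hsub : RetSeqSet m R ⊆ ↑B := by
        rintro L ⟨h1, h2⟩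
        cases L with
        | nil => simp at h2; omega
        | cons p L' =>
          have hp := h1 p (List.mem_cons_self)
          set k := p.1.natAbs with hk
          have hmk : m ≤ k := by
            have habs : (m : ℤ) ≤ |p.1| := hp.2.1
            rw [Int.abs_eq_natAbs] at habs; exact_mod_cast habs
          simp only [List.map_cons, List.sum_cons] at h2
          have hkR : k ≤ R := by omega
          rw [Finset.mem_coe, hB, Finset.mem_biUnion]
          refine ⟨k, Finset.mem_Icc.mpr ⟨hmk, hkR⟩, ?_⟩
          rw [hG, Finset.mem_image]
          refine ⟨(p, L'), ?_, rfl⟩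
          rw [Finset.mem_product]
          constructor
          · rw [hF, Finset.mem_product]
            constructor
            · have := Int.natAbs_eq p.1
              simp only [Finset.mem_insert, Finset.mem_singleton]
              rcases this with h | h
              · left; rw [h]
              · right; rw [h]
            · rw [Finset.mem_Icc]
              refine ⟨hp.2.2.1, ?_⟩
              have : ((k : ℤ)) ^ 2 = p.1 ^ 2 := by
                rw [hk]; exact_mod_cast Int.natAbs_sq p.1
              rw [this]; exact hp.2.2.2
          · rw [hTdef]
            simp only [dif_pos (And.intro hmk hkR), Set.Finite.mem_toFinset]
            exact ⟨fun q hq => h1 q (List.mem_cons_of_mem _ hq), by omega⟩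
      have hfin : (RetSeqSet m R).Finite := (Finset.finite_toSet B).subset hsub
      refine ⟨hfin, ?_⟩
      have hcard1 : (RetSeqSet m R).ncard ≤ B.card := by
        rw [← Set.ncard_coe_finset]
        exact Set.ncard_le_ncard hsub (Finset.finite_toSet B)
      have hcard2 : B.card ≤ ∑ k ∈ Finset.Icc m R, (G k).card :=
        Finset.card_biUnion_le
      have hterm : ∀ k ∈ Finset.Icc m R,
          ((G k).card : ℝ) ≤ 2 * (k : ℝ) ^ 2 * Real.exp (ε * ((R : ℝ) - k)) := by
        intro k hkmem
        rw [Finset.mem_Icc] at hkmem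
        obtain ⟨hmk, hkR⟩ := hkmem
        have hGle : (G k).card ≤ (F k).card * (T k).card := by
          rw [hG]
          calc ((F k ×ˢ T k).image (fun x : (ℤ × ℤ) × List (ℤ × ℤ) => x.1 :: x.2)).card
              ≤ (F k ×ˢ T k).card := Finset.card_image_le
            _ = (F k).card * (T k).card := Finset.card_product _ _
        have hFle : (F k).card ≤ 2 * k ^ 2 := by
          rw [hF]
          rw [Finset.card_product]
          have h1 : ({(k : ℤ), -(k : ℤ)} : Finset ℤ).card ≤ 2 := by
            apply le_trans (Finset.card_insert_le _ _); simp
          have h2 : (Finset.Icc (1 : ℤ) ((k : ℤ) ^ 2)).card = k ^ 2 := by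
            rw [Int.card_Icc]
            have : ((k : ℤ)) ^ 2 + 1 - 1 = ((k ^ 2 : ℕ) : ℤ) := by push_cast; ring
            rw [this, Int.toNat_natCast]
          rw [h2]
          exact Nat.mul_le_mul_right _ h1
        have hTcard : ((T k).card : ℝ) ≤ Real.exp (ε * ((R : ℝ) - k)) := by
          rw [hTdef]
          simp only [dif_pos (And.intro hmk hkR)]
          have h2 := (IH (R - k) (by omega)).2
          have hcast : ((R - k : ℕ) : ℝ) = (R : ℝ) - k := by
            push_cast [Nat.cast_sub hkR]; ring
          rw [hcast] at h2
          rw [Set.ncard_eq_toFinset_card (RetSeqSet m (R - k)) (hT k hmk hkR)] at h2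
          exact h2
        calc ((G k).card : ℝ) ≤ ((F k).card : ℝ) * ((T k).card : ℝ) := by
              exact_mod_cast hGle
          _ ≤ (2 * (k : ℝ) ^ 2) * Real.exp (ε * ((R : ℝ) - k)) := by
              apply mul_le_mul _ hTcard (Nat.cast_nonneg _) (by positivity)
              exact_mod_cast hFle
          _ = 2 * (k : ℝ) ^ 2 * Real.exp (ε * ((R : ℝ) - k)) := by ring
      calc ((RetSeqSet m R).ncard : ℝ) ≤ (B.card : ℝ) := by exact_mod_cast hcard1
        _ ≤ ∑ k ∈ Finset.Icc m R, ((G k).card : ℝ) := by exact_mod_cast hcard2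
        _ ≤ ∑ k ∈ Finset.Icc m R, 2 * (k : ℝ) ^ 2 * Real.exp (ε * ((R : ℝ) - k)) :=
            Finset.sum_le_sum hterm
        _ = Real.exp (ε * R) * ∑ k ∈ Finset.Icc m R,
              2 * (k : ℝ) ^ 2 * Real.exp (-(ε * k)) := by
            rw [Finset.mul_sum]
            apply Finset.sum_congr rfl
            intro k _
            rw [show ε * ((R : ℝ) - k) = ε * R + (-(ε * k)) by ring, Real.exp_add]
            ring
        _ ≤ Real.exp (ε * R) * 1 :=
            mul_le_mul_of_nonneg_left (htail R) (Real.exp_nonneg _)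
        _ = Real.exp (ε * R) := mul_one _

/-- Lemma 5.2: the number of sequences `((r₁,m₁),…,(r_t,m_t))` of essential return data
with each `|rᵢ| ≥ m`, `1 ≤ mᵢ ≤ rᵢ²` and total depth `|r₁| + ⋯ + |r_t| = R` is at most
`e^{εR}`, provided `m` is sufficiently large. -/
theorem count_return_sequences :
    ∀ ε : ℝ, 0 < ε → ∃ m₀ : ℕ, 0 < m₀ ∧
      ∀ m R : ℕ, m₀ ≤ m → m ≤ R →
        (Set.ncard {L : List (ℤ × ℤ) |
            L ≠ [] ∧
            (∀ p ∈ L, p.1 ≠ 0 ∧ (m : ℤ) ≤ |p.1| ∧ 1 ≤ p.2 ∧ p.2 ≤ p.1 ^ 2) ∧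
            (L.map (fun p => p.1.natAbs)).sum = R} : ℝ)
          ≤ Real.exp (ε * R) := by
  intro ε hε
  set f : ℕ → ℝ := fun k => 2 * (k : ℝ) ^ 2 * Real.exp (-(ε * k)) with hf
  have hf_eq : ∀ k : ℕ, f k = 2 * ((k : ℝ) ^ 2 * (Real.exp (-ε)) ^ k) := by
    intro k
    show 2 * (k : ℝ) ^ 2 * Real.exp (-(ε * k)) = _
    have : Real.exp (-(ε * k)) = (Real.exp (-ε)) ^ k := by
      rw [← Real.exp_nat_mul]; ring_nf
    rw [this]; ring
  have hsummable : Summable f := by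
    have hr : ‖Real.exp (-ε)‖ < 1 := by
      rw [Real.norm_eq_abs, abs_of_pos (Real.exp_pos _)]
      exact Real.exp_lt_one_iff.mpr (by linarith)
    have := (summable_pow_mul_geometric_of_norm_lt_one 2 hr).mul_left 2
    apply this.congr
    intro k
    rw [hf_eq k]
  have hnonneg : ∀ k, 0 ≤ f k := by
    intro k; rw [hf]; positivity
  have htendsto : Filter.Tendsto (fun i => ∑' k, f (k + i)) Filter.atTop (nhds 0) :=
    tendsto_sum_nat_add f
  have hev : ∀ᶠ i in Filter.atTop, ∑' k, f (k + i) < 1 :=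
    htendsto.eventually_lt_const one_pos
  obtain ⟨m₁, hm₁⟩ := Filter.eventually_atTop.mp hev
  refine ⟨max m₁ 1, lt_of_lt_of_le one_pos (le_max_right _ _), ?_⟩
  intro m R hm hR
  have hm1 : 1 ≤ m := le_trans (le_max_right _ _) hm
  have htail : ∀ R' : ℕ, ∑ k ∈ Finset.Icc m R', f k ≤ 1 := by
    intro R'
    have hshift : Summable (fun j => f (j + m)) := (summable_nat_add_iff m).mpr hsummable
    have h1 : ∑ k ∈ Finset.Icc m R', f k = ∑ j ∈ Finset.range (R' + 1 - m), f (j + m) := by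
      rw [← Finset.Ico_add_one_right_eq_Icc, Finset.sum_Ico_eq_sum_range]
      apply Finset.sum_congr rfl
      intro j _
      rw [add_comm]
    rw [h1]
    calc ∑ j ∈ Finset.range (R' + 1 - m), f (j + m)
        ≤ ∑' j, f (j + m) := hshift.sum_le_tsum _ (fun i _ => hnonneg _)
      _ ≤ 1 := le_of_lt (hm₁ m (le_trans (le_max_left _ _) hm))
  have hkey := PSet_key m hm1 ε htail R
  have hset : {L : List (ℤ × ℤ) |
      L ≠ [] ∧
      (∀ p ∈ L, p.1 ≠ 0 ∧ (m : ℤ) ≤ |p.1| ∧ 1 ≤ p.2 ∧ p.2 ≤ p.1 ^ 2) ∧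
      (L.map (fun p => p.1.natAbs)).sum = R} = RetSeqSet m R := by
    ext L
    constructor
    · rintro ⟨_, h2, h3⟩; exact ⟨h2, h3⟩
    · rintro ⟨h2, h3⟩
      refine ⟨?_, h2, h3⟩
      rintro rfl
      simp at h3
      omega
  rw [hset]
  exact hkey.2
end
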